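/- Let C_{Γ(LV,ω,1)} be the class of all finite Kripke models whose frame consists of a root x and two disjoint nonempty finite sets C0 and C1 not containing x, where the accessibility relation R is the reflexive relation with C0×C0 ⊆ R, C1×C1 ⊆ R, x R y for every world y, and no other pairs (a root below exactly two finite clusters of final worlds). Then C_{Γ(LV,ω,1)} enjoys 3-IP. -/

import Mathlib

/-- Modal formulas over countably many variables. -/
inductive ModalForm : Type where
  | var : ℕ → ModalForm
  | bot : ModalForm
  | and : ModalForm → ModalForm → ModalForm
  | or : ModalForm → ModalForm → ModalForm
  | not : ModalForm → ModalForm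
  | imp : ModalForm → ModalForm → ModalForm
  | box : ModalForm → ModalForm

namespace ModalForm

mutual
  /-- positively occurring variables -/
  def vpos : ModalForm → Finset ℕ
    | var p => {p}
    | bot => ∅
    | and φ ψ => vpos φ ∪ vpos ψ
    | or φ ψ => vpos φ ∪ vpos ψ
    | not φ => vneg φ
    | imp φ ψ => vneg φ ∪ vpos ψ
    | box φ => vpos φ
  /-- negatively occurring variables -/
  def vneg : ModalForm → Finset ℕ
    | var _ => ∅
    | bot => ∅
    | and φ ψ => vneg φ ∪ vneg ψ
    | or φ ψ => vneg φ ∪ vneg ψ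
    | not φ => vpos φ
    | imp φ ψ => vpos φ ∪ vneg ψ
    | box φ => vneg φ
end

/-- Modal depth: maximal nesting of `□`. -/
def depth : ModalForm → ℕ
  | var _ => 0
  | bot => 0
  | and φ ψ => max (depth φ) (depth ψ)
  | or φ ψ => max (depth φ) (depth ψ)
  | not φ => depth φ
  | imp φ ψ => max (depth φ) (depth ψ)
  | box φ => depth φ + 1

/-- `◇φ := ¬□¬φ` -/
def dia (φ : ModalForm) : ModalForm := not (box (not φ))

/-- `⊤ := ¬⊥` -/
def top : ModalForm := not bot

end ModalForm

/-- An S4 Kripke frame: nonempty set of worlds with a reflexive transitive relation. -/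
structure KFrame : Type 1 where
  W : Type
  R : W → W → Prop
  nonempty : Nonempty W
  refl : ∀ x, R x x
  trans : ∀ x y z, R x y → R y z → R x z

/-- A Kripke model: a frame with a valuation. -/
structure KModel : Type 1 extends KFrame where
  val : W → ℕ → Prop

/-- The model based on frame `F` with valuation `V`. -/
def KFrame.toModel (F : KFrame) (V : F.W → ℕ → Prop) : KModel :=
  { toKFrame := F, val := V }

/-- Satisfaction in a Kripke model. -/
def KModel.Sat (M : KModel) : M.W → ModalForm → Prop
  | w, .var p => M.val w p
  | _, .bot => False
  | w, .and φ ψ => M.Sat w φ ∧ M.Sat w ψ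
  | w, .or φ ψ => M.Sat w φ ∨ M.Sat w ψ
  | w, .not φ => ¬ M.Sat w φ
  | w, .imp φ ψ => M.Sat w φ → M.Sat w ψ
  | w, .box φ => ∀ y, M.R w y → M.Sat y φ

/-- `(M0,w0) →ₙ^{(P⁺,P⁻)} (M1,w1)`: every `(P⁺,P⁻)`-formula of depth ≤ n
satisfied at `(M0,w0)` is satisfied at `(M1,w1)`. -/
def ModalArrow (Pp Pm : Finset ℕ) (n : ℕ) (M0 : KModel) (w0 : M0.W)
    (M1 : KModel) (w1 : M1.W) : Prop :=
  ∀ φ : ModalForm, φ.vpos ⊆ Pp → φ.vneg ⊆ Pm → φ.depth ≤ n →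
    M0.Sat w0 φ → M1.Sat w1 φ

/-- p-morphism between frames. -/
def PMorphism (F G : KFrame) (f : F.W → G.W) : Prop :=
  (∀ x y, F.R x y → G.R (f x) (f y)) ∧
  (∀ x w, G.R (f x) w → ∃ z, F.R x z ∧ f z = w)

/-- The class `C` of Kripke models enjoys `n`-IP. -/
def EnjoysIP (C : Set KModel) (n : ℕ) : Prop :=
  ∀ (Pp Pm : Finset ℕ) (M0 M1 : KModel), M0 ∈ C → M1 ∈ C →
    ∀ (w0 : M0.W) (w1 : M1.W), ModalArrow Pp Pm n M0 w0 M1 w1 →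
      ∃ (F : KFrame) (wstar : F.W) (f0 : F.W → M0.W) (f1 : F.W → M1.W),
        (∀ V : F.W → ℕ → Prop, F.toModel V ∈ C) ∧
        PMorphism F M0.toKFrame f0 ∧
        PMorphism F M1.toKFrame f1 ∧
        f0 wstar = w0 ∧ f1 wstar = w1 ∧
        ∀ x : F.W, ModalArrow Pp Pm 0 M0 (f0 x) M1 (f1 x)

/-- A world is final iff every successor is also a predecessor. -/
def KModel.Final (M : KModel) (w : M.W) : Prop := ∀ y, M.R w y → M.R y w

/-- The cluster of a world. -/
def KModel.cluster (M : KModel) (w : M.W) : Set M.W := {u | M.R w u ∧ M.R u w}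

/-- Cluster `C0` of `M0` matches cluster `C1` of `M1`. -/
def Matches (Pp Pm : Finset ℕ) (M0 M1 : KModel) (C0 : Set M0.W) (C1 : Set M1.W) : Prop :=
  (∀ u0 ∈ C0, ∃ u1 ∈ C1, ModalArrow Pp Pm 0 M0 u0 M1 u1) ∧
  (∀ u1 ∈ C1, ∃ u0 ∈ C0, ModalArrow Pp Pm 0 M0 u0 M1 u1)

/-- `φ` is satisfied at every world of every model in `C`. -/
def ValidOn (C : Set KModel) (φ : ModalForm) : Prop :=
  ∀ M ∈ C, ∀ w : M.W, M.Sat w φ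

/-- The class of Γ(LV,ω,1) models: a root below exactly two
nonempty finite clusters of final worlds. -/
def C_LVo1 : Set KModel :=
  {M | Finite M.W ∧ ∃ (x : M.W) (C0 C1 : Set M.W),
    x ∉ C0 ∧ x ∉ C1 ∧ Disjoint C0 C1 ∧
    C0.Nonempty ∧ C1.Nonempty ∧
    (∀ w : M.W, w = x ∨ w ∈ C0 ∨ w ∈ C1) ∧
    ∀ u v : M.W, M.R u v ↔
      (u = v ∨ (u ∈ C0 ∧ v ∈ C0) ∨ (u ∈ C1 ∧ v ∈ C1) ∨ u = x)}

open Classical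

namespace IPAux

open ModalForm

/-! ### Big conjunction and disjunction -/

def bigAnd : List ModalForm → ModalForm
  | [] => ModalForm.top
  | φ :: l => ModalForm.and φ (bigAnd l)

def bigOr : List ModalForm → ModalForm
  | [] => ModalForm.bot
  | φ :: l => ModalForm.or φ (bigOr l)

lemma sat_bigAnd (M : KModel) (w : M.W) :
    ∀ l : List ModalForm, M.Sat w (bigAnd l) ↔ ∀ φ ∈ l, M.Sat w φ := by
  intro l
  induction l with
  | nil => simp [bigAnd, ModalForm.top, KModel.Sat]
  | cons φ l ih => simp [bigAnd, KModel.Sat, ih]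

lemma sat_bigOr (M : KModel) (w : M.W) :
    ∀ l : List ModalForm, M.Sat w (bigOr l) ↔ ∃ φ ∈ l, M.Sat w φ := by
  intro l
  induction l with
  | nil => simp [bigOr, KModel.Sat]
  | cons φ l ih => simp [bigOr, KModel.Sat, ih]

lemma vpos_bigAnd (P : Finset ℕ) : ∀ l : List ModalForm,
    (∀ φ ∈ l, φ.vpos ⊆ P) → (bigAnd l).vpos ⊆ P := by
  intro l
  induction l with
  | nil => simp [bigAnd, ModalForm.top, ModalForm.vpos, ModalForm.vneg]
  | cons φ l ih =>
    intro h
    simp only [bigAnd, ModalForm.vpos, Finset.union_subset_iff]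
    exact ⟨h φ (by simp), ih (fun ψ hψ => h ψ (by simp [hψ]))⟩

lemma vneg_bigAnd (P : Finset ℕ) : ∀ l : List ModalForm,
    (∀ φ ∈ l, φ.vneg ⊆ P) → (bigAnd l).vneg ⊆ P := by
  intro l
  induction l with
  | nil => simp [bigAnd, ModalForm.top, ModalForm.vpos, ModalForm.vneg]
  | cons φ l ih =>
    intro h
    simp only [bigAnd, ModalForm.vneg, Finset.union_subset_iff]
    exact ⟨h φ (by simp), ih (fun ψ hψ => h ψ (by simp [hψ]))⟩

lemma vpos_bigOr (P : Finset ℕ) : ∀ l : List ModalForm,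
    (∀ φ ∈ l, φ.vpos ⊆ P) → (bigOr l).vpos ⊆ P := by
  intro l
  induction l with
  | nil => simp [bigOr, ModalForm.vpos]
  | cons φ l ih =>
    intro h
    simp only [bigOr, ModalForm.vpos, Finset.union_subset_iff]
    exact ⟨h φ (by simp), ih (fun ψ hψ => h ψ (by simp [hψ]))⟩

lemma vneg_bigOr (P : Finset ℕ) : ∀ l : List ModalForm,
    (∀ φ ∈ l, φ.vneg ⊆ P) → (bigOr l).vneg ⊆ P := by
  intro l
  induction l with
  | nil => simp [bigOr, ModalForm.vneg]
  | cons φ l ih =>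
    intro h
    simp only [bigOr, ModalForm.vneg, Finset.union_subset_iff]
    exact ⟨h φ (by simp), ih (fun ψ hψ => h ψ (by simp [hψ]))⟩

lemma depth_bigAnd (n : ℕ) : ∀ l : List ModalForm,
    (∀ φ ∈ l, φ.depth ≤ n) → (bigAnd l).depth ≤ n := by
  intro l
  induction l with
  | nil => simp [bigAnd, ModalForm.top, ModalForm.depth]
  | cons φ l ih =>
    intro h
    simp only [bigAnd, ModalForm.depth, max_le_iff]
    exact ⟨h φ (by simp), ih (fun ψ hψ => h ψ (by simp [hψ]))⟩

lemma depth_bigOr (n : ℕ) : ∀ l : List ModalForm,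
    (∀ φ ∈ l, φ.depth ≤ n) → (bigOr l).depth ≤ n := by
  intro l
  induction l with
  | nil => simp [bigOr, ModalForm.depth]
  | cons φ l ih =>
    intro h
    simp only [bigOr, ModalForm.depth, max_le_iff]
    exact ⟨h φ (by simp), ih (fun ψ hψ => h ψ (by simp [hψ]))⟩

lemma vpos_dia (φ : ModalForm) : (ModalForm.dia φ).vpos = φ.vpos := by
  simp [ModalForm.dia, ModalForm.vpos, ModalForm.vneg]

lemma vneg_dia (φ : ModalForm) : (ModalForm.dia φ).vneg = φ.vneg := by
  simp [ModalForm.dia, ModalForm.vpos, ModalForm.vneg]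

lemma depth_dia (φ : ModalForm) : (ModalForm.dia φ).depth = φ.depth + 1 := by
  simp [ModalForm.dia, ModalForm.depth]

lemma sat_dia (M : KModel) (w : M.W) (φ : ModalForm) :
    M.Sat w (ModalForm.dia φ) ↔ ∃ y, M.R w y ∧ M.Sat y φ := by
  simp only [ModalForm.dia, KModel.Sat]
  push_neg
  rfl

/-! ### Depth-0 transfer -/

/-- primitive 0-arrow condition -/
def Prim (Pp Pm : Finset ℕ) (M0 M1 : KModel) (u : M0.W) (v : M1.W) : Prop :=
  (∀ p ∈ Pp, M0.val u p → M1.val v p) ∧ (∀ p ∈ Pm, M1.val v p → M0.val u p)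

lemma mono (Pp Pm : Finset ℕ) (M0 M1 : KModel) (u : M0.W) (v : M1.W)
    (h : Prim Pp Pm M0 M1 u v) :
    ∀ φ : ModalForm, φ.depth = 0 →
      ((φ.vpos ⊆ Pp → φ.vneg ⊆ Pm → M0.Sat u φ → M1.Sat v φ) ∧
       (φ.vpos ⊆ Pm → φ.vneg ⊆ Pp → M1.Sat v φ → M0.Sat u φ)) := by
  intro φ
  induction φ with
  | var p =>
    intro _
    constructor
    · intro hp _ hs
      exact h.1 p (hp (by simp [ModalForm.vpos])) hs
    · intro hp _ hs
      exact h.2 p (hp (by simp [ModalForm.vpos])) hs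
  | bot => intro _; exact ⟨fun _ _ hs => hs.elim, fun _ _ hs => hs.elim⟩
  | and φ ψ ihφ ihψ =>
    intro hd
    simp only [ModalForm.depth, Nat.max_eq_zero_iff] at hd
    have h1 := ihφ hd.1; have h2 := ihψ hd.2
    simp only [ModalForm.vpos, ModalForm.vneg, Finset.union_subset_iff]
    constructor
    · rintro ⟨ha, hb⟩ ⟨hc, hd'⟩ ⟨s1, s2⟩
      exact ⟨h1.1 ha hc s1, h2.1 hb hd' s2⟩
    · rintro ⟨ha, hb⟩ ⟨hc, hd'⟩ ⟨s1, s2⟩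
      exact ⟨h1.2 ha hc s1, h2.2 hb hd' s2⟩
  | or φ ψ ihφ ihψ =>
    intro hd
    simp only [ModalForm.depth, Nat.max_eq_zero_iff] at hd
    have h1 := ihφ hd.1; have h2 := ihψ hd.2
    simp only [ModalForm.vpos, ModalForm.vneg, Finset.union_subset_iff]
    constructor
    · rintro ⟨ha, hb⟩ ⟨hc, hd'⟩ s
      exact s.imp (h1.1 ha hc) (h2.1 hb hd')
    · rintro ⟨ha, hb⟩ ⟨hc, hd'⟩ s
      exact s.imp (h1.2 ha hc) (h2.2 hb hd')
  | not φ ihφ =>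
    intro hd
    simp only [ModalForm.depth] at hd
    have h1 := ihφ hd
    simp only [ModalForm.vpos, ModalForm.vneg]
    constructor
    · intro ha hb s hs
      exact s (h1.2 hb ha hs)
    · intro ha hb s hs
      exact s (h1.1 hb ha hs)
  | imp φ ψ ihφ ihψ =>
    intro hd
    simp only [ModalForm.depth, Nat.max_eq_zero_iff] at hd
    have h1 := ihφ hd.1; have h2 := ihψ hd.2
    simp only [ModalForm.vpos, ModalForm.vneg, Finset.union_subset_iff]
    constructor
    · rintro ⟨ha, hb⟩ ⟨hc, hd'⟩ s hs
      exact h2.1 hb hd' (s (h1.2 hc ha hs))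
    · rintro ⟨ha, hb⟩ ⟨hc, hd'⟩ s hs
      exact h2.2 hb hd' (s (h1.1 hc ha hs))
  | box φ ih =>
    intro hd
    simp [ModalForm.depth] at hd

lemma arrow0_iff (Pp Pm : Finset ℕ) (M0 M1 : KModel) (u : M0.W) (v : M1.W) :
    ModalArrow Pp Pm 0 M0 u M1 v ↔ Prim Pp Pm M0 M1 u v := by
  constructor
  · intro h
    constructor
    · intro p hp hval
      exact h (ModalForm.var p) (by simp [ModalForm.vpos, hp])
        (by simp [ModalForm.vneg]) (by simp [ModalForm.depth]) hval
    · intro p hp hval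
      by_contra hcon
      exact (h (ModalForm.not (ModalForm.var p)) (by simp [ModalForm.vpos, ModalForm.vneg])
        (by simp [ModalForm.vpos, ModalForm.vneg, hp]) (by simp [ModalForm.depth]) hcon) hval
  · intro h φ hp hm hd hs
    exact (mono Pp Pm M0 M1 u v h φ (Nat.le_zero.mp hd)).1 hp hm hs

/-! ### Characteristic formulas -/

noncomputable def chr (P Q : Finset ℕ) (M : KModel) (u : M.W) : ModalForm :=
  ModalForm.and
    (bigAnd ((P.filter (fun p => M.val u p)).toList.map ModalForm.var))
    (bigAnd ((Q.filter (fun p => ¬ M.val u p)).toList.map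
      (fun p => ModalForm.not (ModalForm.var p))))

lemma vpos_chr (P Q : Finset ℕ) (M : KModel) (u : M.W) : (chr P Q M u).vpos ⊆ P := by
  simp only [chr, ModalForm.vpos, Finset.union_subset_iff]
  constructor
  · apply vpos_bigAnd
    intro φ hφ
    simp only [List.mem_map, Finset.mem_toList, Finset.mem_filter] at hφ
    rcases hφ with ⟨p, ⟨hp, _⟩, rfl⟩
    simp [ModalForm.vpos, hp]
  · apply vpos_bigAnd
    intro φ hφ
    simp only [List.mem_map, Finset.mem_toList, Finset.mem_filter] at hφ
    rcases hφ with ⟨p, ⟨hp, _⟩, rfl⟩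
    simp [ModalForm.vpos, ModalForm.vneg]

lemma vneg_chr (P Q : Finset ℕ) (M : KModel) (u : M.W) : (chr P Q M u).vneg ⊆ Q := by
  simp only [chr, ModalForm.vneg, Finset.union_subset_iff]
  constructor
  · apply vneg_bigAnd
    intro φ hφ
    simp only [List.mem_map, Finset.mem_toList, Finset.mem_filter] at hφ
    rcases hφ with ⟨p, ⟨hp, _⟩, rfl⟩
    simp [ModalForm.vneg]
  · apply vneg_bigAnd
    intro φ hφ
    simp only [List.mem_map, Finset.mem_toList, Finset.mem_filter] at hφ
    rcases hφ with ⟨p, ⟨hp, _⟩, rfl⟩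
    simp [ModalForm.vpos, ModalForm.vneg, hp]

lemma depth_chr (P Q : Finset ℕ) (M : KModel) (u : M.W) : (chr P Q M u).depth = 0 := by
  simp only [chr, ModalForm.depth, Nat.max_eq_zero_iff]
  constructor
  · have := depth_bigAnd 0 ((P.filter (fun p => M.val u p)).toList.map ModalForm.var) ?_
    · omega
    · intro φ hφ
      simp only [List.mem_map] at hφ
      rcases hφ with ⟨p, _, rfl⟩
      simp [ModalForm.depth]
  · have := depth_bigAnd 0 ((Q.filter (fun p => ¬ M.val u p)).toList.map
      (fun p => ModalForm.not (ModalForm.var p))) ?_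
    · omega
    · intro φ hφ
      simp only [List.mem_map] at hφ
      rcases hφ with ⟨p, _, rfl⟩
      simp [ModalForm.depth]

lemma sat_chr_iff (P Q : Finset ℕ) (M N : KModel) (u : M.W) (v : N.W) :
    N.Sat v (chr P Q M u) ↔
      (∀ p ∈ P, M.val u p → N.val v p) ∧ (∀ p ∈ Q, ¬ M.val u p → ¬ N.val v p) := by
  simp only [chr, KModel.Sat, sat_bigAnd, List.mem_map, Finset.mem_toList, Finset.mem_filter]
  constructor
  · rintro ⟨h1, h2⟩
    constructor
    · intro p hp hval
      exact h1 (ModalForm.var p) ⟨p, ⟨hp, hval⟩, rfl⟩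
    · intro p hp hval
      exact h2 (ModalForm.not (ModalForm.var p)) ⟨p, ⟨hp, hval⟩, rfl⟩
  · rintro ⟨h1, h2⟩
    constructor
    · rintro φ ⟨p, ⟨hp, hval⟩, rfl⟩
      exact h1 p hp hval
    · rintro φ ⟨p, ⟨hp, hval⟩, rfl⟩
      exact h2 p hp hval

lemma sat_chr_self (P Q : Finset ℕ) (M : KModel) (u : M.W) : M.Sat u (chr P Q M u) := by
  rw [sat_chr_iff]
  exact ⟨fun _ _ h => h, fun _ _ h => h⟩

lemma sat_chr0 (Pp Pm : Finset ℕ) (M0 M1 : KModel) (u : M0.W) (v : M1.W) :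
    M1.Sat v (chr Pp Pm M0 u) ↔ Prim Pp Pm M0 M1 u v := by
  rw [sat_chr_iff, Prim]
  constructor
  · rintro ⟨h1, h2⟩
    exact ⟨h1, fun p hp hv => by_contra fun hc => h2 p hp hc hv⟩
  · rintro ⟨h1, h2⟩
    exact ⟨h1, fun p hp hu hv => hu (h2 p hp hv)⟩

lemma sat_chr1 (Pp Pm : Finset ℕ) (M0 M1 : KModel) (u : M0.W) (v : M1.W) :
    M0.Sat u (chr Pm Pp M1 v) ↔ Prim Pp Pm M0 M1 u v := by
  rw [sat_chr_iff, Prim]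
  constructor
  · rintro ⟨h1, h2⟩
    exact ⟨fun p hp hu => by_contra fun hc => h2 p hp hc hu, h1⟩
  · rintro ⟨h1, h2⟩
    exact ⟨h2, fun p hp hv hu => hv (h1 p hp hu)⟩

/-! ### Structure of models in `C_LVo1` -/

structure Decomp (M : KModel) where
  x : M.W
  A : Bool → Set M.W
  hx : ∀ b, x ∉ A b
  hdisj : ∀ u, u ∈ A false → u ∈ A true → False
  hne : ∀ b, (A b).Nonempty
  hcover : ∀ w, w = x ∨ w ∈ A false ∨ w ∈ A true
  hR : ∀ u v, M.R u v ↔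
    (u = v ∨ (u ∈ A false ∧ v ∈ A false) ∨ (u ∈ A true ∧ v ∈ A true) ∨ u = x)

lemma decomp_of_mem {M : KModel} (h : M ∈ C_LVo1) : Finite M.W ∧ Nonempty (Decomp M) := by
  obtain ⟨hfin, x, C0, C1, hx0, hx1, hdisj, hne0, hne1, hcover, hR⟩ := h
  refine ⟨hfin, ⟨⟨x, fun b => if b then C1 else C0, ?_, ?_, ?_, ?_, ?_⟩⟩⟩
  · intro b; cases b <;> simpa
  · intro u h0 h1
    simp only [if_true, if_false] at h0 h1
    exact (Set.disjoint_left.mp hdisj h0) h1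
  · intro b; cases b <;> simpa
  · intro w; simpa using hcover w
  · intro u v; simpa using hR u v

lemma Decomp.root_R {M : KModel} (D : Decomp M) (v : M.W) : M.R D.x v :=
  (D.hR _ _).mpr (Or.inr (Or.inr (Or.inr rfl)))

lemma Decomp.ne_x {M : KModel} (D : Decomp M) {b : Bool} {u : M.W} (hu : u ∈ D.A b) :
    u ≠ D.x := fun h => D.hx b (h ▸ hu)

lemma Decomp.cl_R {M : KModel} (D : Decomp M) {b : Bool} {u : M.W} (hu : u ∈ D.A b)
    (v : M.W) : M.R u v ↔ v ∈ D.A b := by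
  constructor
  · intro h
    rcases (D.hR u v).mp h with rfl | ⟨h1, h2⟩ | ⟨h1, h2⟩ | rfl
    · exact hu
    · cases b
      · exact h2
      · exact absurd (D.hdisj u h1 hu) id
    · cases b
      · exact absurd (D.hdisj u hu h1) id
      · exact h2
    · exact absurd hu (D.hx b)
  · intro hv
    apply (D.hR u v).mpr
    cases b
    · exact Or.inr (Or.inl ⟨hu, hv⟩)
    · exact Or.inr (Or.inr (Or.inl ⟨hu, hv⟩))

lemma Decomp.cl_R' {M : KModel} (D : Decomp M) {b : Bool} {u v : M.W} (hu : u ∈ D.A b)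
    (hv : v ∈ D.A b) : M.R u v := (D.cl_R hu v).mpr hv

/-! ### The frame construction -/

lemma construct (Pp Pm : Finset ℕ) (M0 M1 : KModel)
    (S : Bool → Set M0.W) (T : Bool → Set M1.W)
    (w0 : M0.W) (w1 : M1.W) (h0 : M0 ∈ C_LVo1) (h1 : M1 ∈ C_LVo1)
    (hprim : Prim Pp Pm M0 M1 w0 w1)
    (hSne : ∀ b, (S b).Nonempty)
    (hScl : ∀ b, ∀ u ∈ S b, ∀ v, M0.R u v ↔ v ∈ S b)
    (hTcl : ∀ b, ∀ v ∈ T b, ∀ v', M1.R v v' ↔ v' ∈ T b)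
    (hSsub : ∀ b, ∀ u ∈ S b, M0.R w0 u)
    (hTsub : ∀ b, ∀ v ∈ T b, M1.R w1 v)
    (hSsup : ∀ v, M0.R w0 v → v = w0 ∨ v ∈ S false ∨ v ∈ S true)
    (hTsup : ∀ v, M1.R w1 v → v = w1 ∨ v ∈ T false ∨ v ∈ T true)
    (hm1 : ∀ b, ∀ u ∈ S b, ∃ v ∈ T b, Prim Pp Pm M0 M1 u v)
    (hm2 : ∀ b, ∀ v ∈ T b, ∃ u ∈ S b, Prim Pp Pm M0 M1 u v) :
    ∃ (F : KFrame) (wstar : F.W) (f0 : F.W → M0.W) (f1 : F.W → M1.W),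
      (∀ V : F.W → ℕ → Prop, F.toModel V ∈ C_LVo1) ∧
      PMorphism F M0.toKFrame f0 ∧ PMorphism F M1.toKFrame f1 ∧
      f0 wstar = w0 ∧ f1 wstar = w1 ∧
      ∀ z : F.W, ModalArrow Pp Pm 0 M0 (f0 z) M1 (f1 z) := by
  haveI hfin0 : Finite M0.W := (decomp_of_mem h0).1
  haveI hfin1 : Finite M1.W := (decomp_of_mem h1).1
  haveI := Fintype.ofFinite M0.W
  haveI := Fintype.ofFinite M1.W
  refine ⟨⟨{z : Option (Bool × M0.W × M1.W) //
      ∀ b u v, z = some (b, u, v) → u ∈ S b ∧ v ∈ T b ∧ Prim Pp Pm M0 M1 u v},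
      fun z z' => z.1 = none ∨ z.1.map Prod.fst = z'.1.map Prod.fst,
      ⟨⟨none, by simp⟩⟩, fun z => Or.inr rfl, ?_⟩,
    ⟨none, by simp⟩,
    fun z => z.1.elim w0 (fun p => p.2.1),
    fun z => z.1.elim w1 (fun p => p.2.2),
    ?_, ⟨?_, ?_⟩, ⟨?_, ?_⟩, rfl, rfl, ?_⟩
  · -- transitivity
    rintro x y z (h1' | h1') h2
    · exact Or.inl h1'
    · rcases h2 with h2 | h2
      · rw [h2] at h1'
        simp only [Option.map_none] at h1'
        exact Or.inl (Option.map_eq_none_iff.mp h1')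
      · exact Or.inr (h1'.trans h2)
  · -- class membership
    intro V
    refine ⟨Finite.of_injective (fun z => z.1) (fun a b h => Subtype.ext h), ⟨none, by simp⟩,
      {z | z.1.map Prod.fst = some false}, {z | z.1.map Prod.fst = some true},
      ?_, ?_, ?_, ?_, ?_, ?_, ?_⟩
    · intro h; cases h
    · intro h; cases h
    · rw [Set.disjoint_left]
      intro z hz hz'
      simp only [Set.mem_setOf_eq] at hz hz'
      rw [hz] at hz'
      simp at hz'
    · obtain ⟨u, hu⟩ := hSne false
      obtain ⟨v, hv, hpr⟩ := hm1 false u hu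
      refine ⟨⟨some (false, u, v), ?_⟩, rfl⟩
      rintro b' u' v' heq
      simp only [Option.some.injEq, Prod.mk.injEq] at heq
      obtain ⟨rfl, rfl, rfl⟩ := heq
      exact ⟨hu, hv, hpr⟩
    · obtain ⟨u, hu⟩ := hSne true
      obtain ⟨v, hv, hpr⟩ := hm1 true u hu
      refine ⟨⟨some (true, u, v), ?_⟩, rfl⟩
      rintro b' u' v' heq
      simp only [Option.some.injEq, Prod.mk.injEq] at heq
      obtain ⟨rfl, rfl, rfl⟩ := heq
      exact ⟨hu, hv, hpr⟩
    · -- cover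
      rintro ⟨_ | ⟨b, u, v⟩, hzp⟩
      · exact Or.inl (Subtype.ext rfl)
      · cases b
        · exact Or.inr (Or.inl rfl)
        · exact Or.inr (Or.inr rfl)
    · -- relation characterization
      rintro ⟨z, hzp⟩ ⟨z', hzp'⟩
      show (z = none ∨ z.map Prod.fst = z'.map Prod.fst) ↔ _
      constructor
      · rintro (rfl | hz)
        · exact Or.inr (Or.inr (Or.inr (Subtype.ext rfl)))
        · rcases z with _ | ⟨b, u, v⟩
          · exact Or.inr (Or.inr (Or.inr (Subtype.ext rfl)))
          · cases b
            · exact Or.inr (Or.inl ⟨rfl,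
                hz.symm⟩)
            · exact Or.inr (Or.inr (Or.inl ⟨rfl,
                hz.symm⟩))
      · rintro (heq | ⟨hz, hz'⟩ | ⟨hz, hz'⟩ | heq)
        · replace heq : z = _ := congrArg Subtype.val heq
          exact Or.inr (by rw [heq])
        · change _ = _ at hz hz'
          exact Or.inr (hz.trans hz'.symm)
        · change _ = _ at hz hz'
          exact Or.inr (hz.trans hz'.symm)
        · replace heq : z = _ := congrArg Subtype.val heq
          exact Or.inl heq
  · -- f0 forward
    rintro ⟨z, hzp⟩ ⟨z', hzp'⟩ h
    rcases z with _ | ⟨b, u, v⟩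
    · rcases z' with _ | ⟨b', u', v'⟩
      · exact M0.refl w0
      · exact hSsub b' u' (hzp' b' u' v' rfl).1
    · rcases h with h | h
      · simp at h
      · rcases z' with _ | ⟨b', u', v'⟩
        · simp at h
        · simp at h
          obtain rfl : b = b' := h
          exact (hScl b u (hzp b u v rfl).1 u').mpr (hzp' b u' v' rfl).1
  · -- f0 back
    rintro ⟨z, hzp⟩ w hw
    rcases z with _ | ⟨b, u, v⟩
    · rcases hSsup w hw with rfl | hwb
      · exact ⟨⟨none, hzp⟩, Or.inl rfl, rfl⟩
      · obtain ⟨b, hwb⟩ : ∃ b, w ∈ S b := by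
          rcases hwb with h | h
          exacts [⟨false, h⟩, ⟨true, h⟩]
        obtain ⟨v, hv, hpr⟩ := hm1 b w hwb
        refine ⟨⟨some (b, w, v), ?_⟩, Or.inl rfl, rfl⟩
        rintro b' u' v' heq
        simp only [Option.some.injEq, Prod.mk.injEq] at heq
        obtain ⟨rfl, rfl, rfl⟩ := heq
        exact ⟨hwb, hv, hpr⟩
    · have hu := (hzp b u v rfl).1
      have hwb : w ∈ S b := (hScl b u hu w).mp hw
      obtain ⟨v', hv', hpr⟩ := hm1 b w hwb
      refine ⟨⟨some (b, w, v'), ?_⟩, Or.inr rfl, rfl⟩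
      rintro b' u' v'' heq
      simp only [Option.some.injEq, Prod.mk.injEq] at heq
      obtain ⟨rfl, rfl, rfl⟩ := heq
      exact ⟨hwb, hv', hpr⟩
  · -- f1 forward
    rintro ⟨z, hzp⟩ ⟨z', hzp'⟩ h
    rcases z with _ | ⟨b, u, v⟩
    · rcases z' with _ | ⟨b', u', v'⟩
      · exact M1.refl w1
      · exact hTsub b' v' (hzp' b' u' v' rfl).2.1
    · rcases h with h | h
      · simp at h
      · rcases z' with _ | ⟨b', u', v'⟩
        · simp at h
        · simp at h
          obtain rfl : b = b' := h
          exact (hTcl b v (hzp b u v rfl).2.1 v').mpr (hzp' b u' v' rfl).2.1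
  · -- f1 back
    rintro ⟨z, hzp⟩ w hw
    rcases z with _ | ⟨b, u, v⟩
    · rcases hTsup w hw with rfl | hwb
      · exact ⟨⟨none, hzp⟩, Or.inl rfl, rfl⟩
      · obtain ⟨b, hwb⟩ : ∃ b, w ∈ T b := by
          rcases hwb with h | h
          exacts [⟨false, h⟩, ⟨true, h⟩]
        obtain ⟨u, hu, hpr⟩ := hm2 b w hwb
        refine ⟨⟨some (b, u, w), ?_⟩, Or.inl rfl, rfl⟩
        rintro b' u' v' heq
        simp only [Option.some.injEq, Prod.mk.injEq] at heq
        obtain ⟨rfl, rfl, rfl⟩ := heq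
        exact ⟨hu, hwb, hpr⟩
    · have hv := (hzp b u v rfl).2.1
      have hwb : w ∈ T b := (hTcl b v hv w).mp hw
      obtain ⟨u', hu', hpr⟩ := hm2 b w hwb
      refine ⟨⟨some (b, u', w), ?_⟩, Or.inr rfl, rfl⟩
      rintro b' u'' v'' heq
      simp only [Option.some.injEq, Prod.mk.injEq] at heq
      obtain ⟨rfl, rfl, rfl⟩ := heq
      exact ⟨hu', hwb, hpr⟩
  · -- 0-arrows
    rintro ⟨_ | ⟨b, u, v⟩, hzp⟩
    · exact (arrow0_iff Pp Pm M0 M1 w0 w1).mpr hprim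
    · exact (arrow0_iff Pp Pm M0 M1 u v).mpr (hzp b u v rfl).2.2

/-! ### Transfer lemmas via formulas -/

section Transfer

variable {Pp Pm : Finset ℕ} {M0 M1 : KModel} {w0 : M0.W} {w1 : M1.W}

lemma forth1 (H : ModalArrow Pp Pm 3 M0 w0 M1 w1) {u : M0.W} (hu : M0.R w0 u) :
    ∃ v, M1.R w1 v ∧ Prim Pp Pm M0 M1 u v := by
  have hsat : M1.Sat w1 (ModalForm.dia (chr Pp Pm M0 u)) := by
    apply H
    · rw [vpos_dia]; exact vpos_chr _ _ _ _
    · rw [vneg_dia]; exact vneg_chr _ _ _ _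
    · rw [depth_dia, depth_chr]; omega
    · rw [sat_dia]
      exact ⟨u, hu, sat_chr_self _ _ _ _⟩
  rw [sat_dia] at hsat
  obtain ⟨v, hv, hs⟩ := hsat
  exact ⟨v, hv, (sat_chr0 Pp Pm M0 M1 u v).mp hs⟩

lemma forth2 (H : ModalArrow Pp Pm 3 M0 w0 M1 w1) {u : M0.W}
    (hu : ∀ y, M0.R w0 y → M0.R y u) :
    ∀ v', M1.R w1 v' → ∃ v, M1.R v' v ∧ Prim Pp Pm M0 M1 u v := by
  have hsat : M1.Sat w1 (ModalForm.box (ModalForm.dia (chr Pp Pm M0 u))) := by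
    apply H
    · show (ModalForm.dia (chr Pp Pm M0 u)).vpos ⊆ Pp
      rw [vpos_dia]; exact vpos_chr _ _ _ _
    · show (ModalForm.dia (chr Pp Pm M0 u)).vneg ⊆ Pm
      rw [vneg_dia]; exact vneg_chr _ _ _ _
    · show (ModalForm.dia (chr Pp Pm M0 u)).depth + 1 ≤ 3
      rw [depth_dia, depth_chr]; omega
    · intro y hy
      rw [sat_dia]
      exact ⟨u, hu y hy, sat_chr_self _ _ _ _⟩
  intro v' hv'
  have := hsat v' hv'
  rw [sat_dia] at this
  obtain ⟨v, hv, hs⟩ := this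
  exact ⟨v, hv, (sat_chr0 Pp Pm M0 M1 u v).mp hs⟩

lemma back1 (H : ModalArrow Pp Pm 3 M0 w0 M1 w1) {v : M1.W} (hv : M1.R w1 v) :
    ∃ u, M0.R w0 u ∧ Prim Pp Pm M0 M1 u v := by
  by_contra hcon
  push_neg at hcon
  have hsat : M0.Sat w0 (ModalForm.box (ModalForm.not (chr Pm Pp M1 v))) := by
    intro y hy hs
    exact hcon y hy ((sat_chr1 Pp Pm M0 M1 y v).mp hs)
  have := H _ ?_ ?_ ?_ hsat v hv
  · exact this (sat_chr_self _ _ _ _)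
  · show (chr Pm Pp M1 v).vneg ⊆ Pp
    exact vneg_chr _ _ _ _
  · show (chr Pm Pp M1 v).vpos ⊆ Pm
    exact vpos_chr _ _ _ _
  · show (chr Pm Pp M1 v).depth + 1 ≤ 3
    rw [depth_chr]; omega

lemma back2 (H : ModalArrow Pp Pm 3 M0 w0 M1 w1) {a : M0.W} (ha : M0.R w0 a)
    {v : M1.W} (hv : ∀ v', M1.R w1 v' → M1.R v' v) :
    ∃ u, M0.R a u ∧ Prim Pp Pm M0 M1 u v := by
  by_contra hcon
  push_neg at hcon
  have hsat : M0.Sat w0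
      (ModalForm.dia (ModalForm.box (ModalForm.not (chr Pm Pp M1 v)))) := by
    rw [sat_dia]
    refine ⟨a, ha, ?_⟩
    intro y hy hs
    exact hcon y hy ((sat_chr1 Pp Pm M0 M1 y v).mp hs)
  have := H _ ?_ ?_ ?_ hsat
  · rw [sat_dia] at this
    obtain ⟨v', hv', hbox⟩ := this
    exact hbox v (hv v' hv') (sat_chr_self _ _ _ _)
  · rw [vpos_dia]
    show (chr Pm Pp M1 v).vneg ⊆ Pp
    exact vneg_chr _ _ _ _
  · rw [vneg_dia]
    show (chr Pm Pp M1 v).vpos ⊆ Pm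
    exact vpos_chr _ _ _ _
  · rw [depth_dia]
    show (chr Pm Pp M1 v).depth + 1 + 1 ≤ 3
    rw [depth_chr]; omega

lemma claim1 (D0 : Decomp M0) (D1 : Decomp M1)
    (H : ModalArrow Pp Pm 3 M0 D0.x M1 D1.x) (hfin : Finite M0.W) (b : Bool) :
    ∃ c, (∀ u ∈ D0.A b, ∃ v ∈ D1.A c, Prim Pp Pm M0 M1 u v) ∧
         (∀ v ∈ D1.A c, ∃ u ∈ D0.A b, Prim Pp Pm M0 M1 u v) := by
  classical
  haveI := hfin
  set l := (D0.A b).toFinite.toFinset.toList with hl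
  have hmem : ∀ u : M0.W, u ∈ l ↔ u ∈ D0.A b := by
    intro u; simp [hl, Set.Finite.mem_toFinset]
  set Δ : ModalForm := ModalForm.and
      (bigAnd (l.map fun u => ModalForm.dia (chr Pp Pm M0 u)))
      (ModalForm.box (bigOr (l.map fun u => chr Pp Pm M0 u))) with hΔ
  have hsat : M1.Sat D1.x (ModalForm.dia (ModalForm.box Δ)) := by
    apply H
    · rw [vpos_dia]
      show Δ.vpos ⊆ Pp
      rw [hΔ]
      simp only [ModalForm.vpos]
      apply Finset.union_subset
      · apply vpos_bigAnd
        rintro φ hφ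
        rw [List.mem_map] at hφ
        obtain ⟨u, _, rfl⟩ := hφ
        rw [vpos_dia]
        exact vpos_chr _ _ _ _
      · apply vpos_bigOr
        rintro φ hφ
        rw [List.mem_map] at hφ
        obtain ⟨u, _, rfl⟩ := hφ
        exact vpos_chr _ _ _ _
    · rw [vneg_dia]
      show Δ.vneg ⊆ Pm
      rw [hΔ]
      simp only [ModalForm.vneg]
      apply Finset.union_subset
      · apply vneg_bigAnd
        rintro φ hφ
        rw [List.mem_map] at hφ
        obtain ⟨u, _, rfl⟩ := hφ
        rw [vneg_dia]
        exact vneg_chr _ _ _ _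
      · apply vneg_bigOr
        rintro φ hφ
        rw [List.mem_map] at hφ
        obtain ⟨u, _, rfl⟩ := hφ
        exact vneg_chr _ _ _ _
    · rw [depth_dia]
      show Δ.depth + 1 + 1 ≤ 3
      have h1 : Δ.depth ≤ 1 := by
        rw [hΔ]
        simp only [ModalForm.depth, max_le_iff]
        constructor
        · apply depth_bigAnd
          rintro φ hφ
          rw [List.mem_map] at hφ
          obtain ⟨u, _, rfl⟩ := hφ
          rw [depth_dia, depth_chr]
        · have : (bigOr (l.map fun u => chr Pp Pm M0 u)).depth ≤ 0 := by
            apply depth_bigOr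
            rintro φ hφ
            rw [List.mem_map] at hφ
            obtain ⟨u, _, rfl⟩ := hφ
            rw [depth_chr]
          omega
      omega
    · rw [sat_dia]
      obtain ⟨a, ha⟩ := D0.hne b
      refine ⟨a, D0.root_R a, ?_⟩
      intro y hy
      have hyA : y ∈ D0.A b := (D0.cl_R ha y).mp hy
      rw [hΔ]
      simp only [KModel.Sat, sat_bigAnd, sat_bigOr, List.mem_map]
      constructor
      · rintro φ ⟨u, hu, rfl⟩
        rw [sat_dia]
        exact ⟨u, D0.cl_R' hyA ((hmem u).mp hu), sat_chr_self _ _ _ _⟩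
      · intro y' hy'
        have hy'A : y' ∈ D0.A b := (D0.cl_R hyA y').mp hy'
        exact ⟨chr Pp Pm M0 y', ⟨y', (hmem y').mpr hy'A, rfl⟩, sat_chr_self _ _ _ _⟩
  rw [sat_dia] at hsat
  obtain ⟨v', hv', hbox⟩ := hsat
  obtain ⟨c, v, hvc, hΔv⟩ : ∃ c v, v ∈ D1.A c ∧ M1.Sat v Δ := by
    rcases D1.hcover v' with rfl | hv'c
    · obtain ⟨v, hv⟩ := D1.hne false
      exact ⟨false, v, hv, hbox v (D1.root_R v)⟩
    · obtain ⟨c, hc⟩ : ∃ c, v' ∈ D1.A c := by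
        rcases hv'c with h | h
        exacts [⟨false, h⟩, ⟨true, h⟩]
      exact ⟨c, v', hc, hbox v' (M1.refl v')⟩
  rw [hΔ] at hΔv
  simp only [KModel.Sat, sat_bigAnd, sat_bigOr, List.mem_map] at hΔv
  obtain ⟨h1, h2⟩ := hΔv
  refine ⟨c, ?_, ?_⟩
  · intro u hu
    have := h1 _ ⟨u, (hmem u).mpr hu, rfl⟩
    rw [sat_dia] at this
    obtain ⟨v'', hv'', hs⟩ := this
    exact ⟨v'', (D1.cl_R hvc v'').mp hv'', (sat_chr0 Pp Pm M0 M1 u v'').mp hs⟩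
  · intro v'' hv''
    obtain ⟨φ, ⟨u, hu, rfl⟩, hs⟩ := h2 v'' (D1.cl_R' hvc hv'')
    exact ⟨u, (hmem u).mp hu, (sat_chr0 Pp Pm M0 M1 u v'').mp hs⟩

lemma claim2 (D0 : Decomp M0) (D1 : Decomp M1)
    (H : ModalArrow Pp Pm 3 M0 D0.x M1 D1.x) (hfin : Finite M1.W) (c : Bool) :
    ∃ b, (∀ u ∈ D0.A b, ∃ v ∈ D1.A c, Prim Pp Pm M0 M1 u v) ∧
         (∀ v ∈ D1.A c, ∃ u ∈ D0.A b, Prim Pp Pm M0 M1 u v) := by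
  classical
  haveI := hfin
  by_contra hcon
  push_neg at hcon
  have hnm : ∀ b : Bool, (∃ u ∈ D0.A b, ∀ v ∈ D1.A c, ¬ Prim Pp Pm M0 M1 u v) ∨
      (∃ v ∈ D1.A c, ∀ u ∈ D0.A b, ¬ Prim Pp Pm M0 M1 u v) := by
    intro b
    by_cases hMF : ∀ u ∈ D0.A b, ∃ v ∈ D1.A c, Prim Pp Pm M0 M1 u v
    · obtain ⟨v, hv, hv'⟩ := hcon b hMF
      exact Or.inr ⟨v, hv, hv'⟩
    · push_neg at hMF
      exact Or.inl hMF
  set lv := (D1.A c).toFinite.toFinset.toList with hlv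
  have hmem : ∀ v : M1.W, v ∈ lv ↔ v ∈ D1.A c := by
    intro v; simp [hlv, Set.Finite.mem_toFinset]
  set χ : ModalForm := ModalForm.or
      (bigOr (lv.map fun v => ModalForm.box (ModalForm.not (chr Pm Pp M1 v))))
      (ModalForm.dia (bigAnd (lv.map fun v => ModalForm.not (chr Pm Pp M1 v)))) with hχ
  -- in each cluster of M0 there is a world satisfying χ
  have hkey : ∀ b : Bool, ∃ y ∈ D0.A b, M0.Sat y χ := by
    intro b
    rcases hnm b with ⟨u, hu, hall⟩ | ⟨v, hv, hall⟩
    · refine ⟨u, hu, Or.inr ?_⟩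
      rw [sat_dia]
      refine ⟨u, M0.refl u, ?_⟩
      rw [sat_bigAnd]
      rintro φ hφ
      rw [List.mem_map] at hφ
      obtain ⟨v, hvl, rfl⟩ := hφ
      intro hs
      exact hall v ((hmem v).mp hvl) ((sat_chr1 Pp Pm M0 M1 u v).mp hs)
    · obtain ⟨y, hy⟩ := D0.hne b
      refine ⟨y, hy, Or.inl ?_⟩
      rw [sat_bigOr]
      refine ⟨ModalForm.box (ModalForm.not (chr Pm Pp M1 v)),
        List.mem_map.mpr ⟨v, (hmem v).mpr hv, rfl⟩, ?_⟩
      intro y' hy' hs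
      exact hall y' ((D0.cl_R hy y').mp hy') ((sat_chr1 Pp Pm M0 M1 y' v).mp hs)
  have hsat : M1.Sat D1.x (ModalForm.box (ModalForm.dia χ)) := by
    apply H
    · show (ModalForm.dia χ).vpos ⊆ Pp
      rw [vpos_dia, hχ]
      simp only [ModalForm.vpos, ModalForm.vneg]
      apply Finset.union_subset
      · apply vpos_bigOr
        rintro φ hφ
        rw [List.mem_map] at hφ
        obtain ⟨v, _, rfl⟩ := hφ
        show (chr Pm Pp M1 v).vneg ⊆ Pp
        exact vneg_chr _ _ _ _
      · apply vpos_bigAnd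
        rintro φ hφ
        rw [List.mem_map] at hφ
        obtain ⟨v, _, rfl⟩ := hφ
        show (chr Pm Pp M1 v).vneg ⊆ Pp
        exact vneg_chr _ _ _ _
    · show (ModalForm.dia χ).vneg ⊆ Pm
      rw [vneg_dia, hχ]
      simp only [ModalForm.vneg, ModalForm.vpos]
      apply Finset.union_subset
      · apply vneg_bigOr
        rintro φ hφ
        rw [List.mem_map] at hφ
        obtain ⟨v, _, rfl⟩ := hφ
        show (chr Pm Pp M1 v).vpos ⊆ Pm
        exact vpos_chr _ _ _ _
      · apply vneg_bigAnd
        rintro φ hφ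
        rw [List.mem_map] at hφ
        obtain ⟨v, _, rfl⟩ := hφ
        show (chr Pm Pp M1 v).vpos ⊆ Pm
        exact vpos_chr _ _ _ _
    · show (ModalForm.dia χ).depth + 1 ≤ 3
      rw [depth_dia]
      have hd : χ.depth ≤ 1 := by
        rw [hχ]
        simp only [ModalForm.depth, max_le_iff]
        constructor
        · apply depth_bigOr
          rintro φ hφ
          rw [List.mem_map] at hφ
          obtain ⟨v, _, rfl⟩ := hφ
          show (chr Pm Pp M1 v).depth + 1 ≤ 1
          rw [depth_chr]
        · have h0 : (bigAnd (lv.map fun v => ModalForm.not (chr Pm Pp M1 v))).depth ≤ 0 := by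
            apply depth_bigAnd
            rintro φ hφ
            rw [List.mem_map] at hφ
            obtain ⟨v, _, rfl⟩ := hφ
            show (chr Pm Pp M1 v).depth ≤ 0
            rw [depth_chr]
          have h1 := depth_dia (bigAnd (lv.map fun v => ModalForm.not (chr Pm Pp M1 v)))
          omega
      omega
    · intro y hy
      rw [sat_dia]
      rcases D0.hcover y with rfl | hyb
      · obtain ⟨y', hy', hsχ⟩ := hkey false
        exact ⟨y', D0.root_R y', hsχ⟩
      · obtain ⟨b, hb⟩ : ∃ b, y ∈ D0.A b := by
          rcases hyb with h | h
          exacts [⟨false, h⟩, ⟨true, h⟩]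
        obtain ⟨y', hy', hsχ⟩ := hkey b
        exact ⟨y', D0.cl_R' hb hy', hsχ⟩
  obtain ⟨v0, hv0⟩ := D1.hne c
  have := hsat v0 (D1.root_R v0)
  rw [sat_dia] at this
  obtain ⟨v', hv', hsχ⟩ := this
  have hv'c : v' ∈ D1.A c := (D1.cl_R hv0 v').mp hv'
  rw [hχ] at hsχ
  rcases hsχ with hs | hs
  · rw [sat_bigOr] at hs
    obtain ⟨φ, hφ, hs⟩ := hs
    rw [List.mem_map] at hφ
    obtain ⟨v, hvl, rfl⟩ := hφ
    exact hs v (D1.cl_R' hv'c ((hmem v).mp hvl)) (sat_chr_self _ _ _ _)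
  · rw [sat_dia] at hs
    obtain ⟨v'', hv'', hs⟩ := hs
    rw [sat_bigAnd] at hs
    have hv''c : v'' ∈ D1.A c := (D1.cl_R hv'c v'').mp hv''
    exact hs _ (List.mem_map.mpr ⟨v'', (hmem v'').mpr hv''c, rfl⟩) (sat_chr_self _ _ _ _)

end Transfer

end IPAux
theorem stmt14 : EnjoysIP C_LVo1 3 := by
  intro Pp Pm M0 M1 h0 h1 w0 w1 H
  obtain ⟨hfin0, ⟨D0⟩⟩ := IPAux.decomp_of_mem h0
  obtain ⟨hfin1, ⟨D1⟩⟩ := IPAux.decomp_of_mem h1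
  have hprim : IPAux.Prim Pp Pm M0 M1 w0 w1 :=
    (IPAux.arrow0_iff Pp Pm M0 M1 w0 w1).mp
      (fun φ hp hm hd => H φ hp hm (hd.trans (by omega)))
  have hcov0 := D0.hcover w0
  have hcov1 := D1.hcover w1
  rcases hcov0 with hw0x | hw0b
  · rcases hcov1 with hw1x | hw1c
    · -- Case D : both roots
      subst hw0x; subst hw1x
      set e : Bool → Bool → Prop := fun b c =>
        (∀ u ∈ D0.A b, ∃ v ∈ D1.A c, IPAux.Prim Pp Pm M0 M1 u v) ∧
        (∀ v ∈ D1.A c, ∃ u ∈ D0.A b, IPAux.Prim Pp Pm M0 M1 u v) with he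
      have hc1 : ∀ b, ∃ c, e b c := fun b => IPAux.claim1 D0 D1 H hfin0 b
      have hc2 : ∀ c, ∃ b, e b c := fun c => IPAux.claim2 D0 D1 H hfin1 c
      have hmatch : ∃ c0 : Bool, e false c0 ∧ e true (!c0) := by
        by_cases h00 : e false false
        · by_cases h11 : e true true
          · exact ⟨false, h00, by simpa using h11⟩
          · obtain ⟨c, hc⟩ := hc1 true
            have hc' : e true false := by
              cases c
              · exact hc
              · exact absurd hc h11
            obtain ⟨b, hb⟩ := hc2 true
            have hb' : e false true := by
              cases b
              · exact hb
              · exact absurd hb h11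
            exact ⟨true, hb', by simpa using hc'⟩
        · obtain ⟨c, hc⟩ := hc1 false
          have hc' : e false true := by
            cases c
            · exact absurd hc h00
            · exact hc
          obtain ⟨b, hb⟩ := hc2 false
          have hb' : e true false := by
            cases b
            · exact absurd hb h00
            · exact hb
          exact ⟨true, hc', by simpa using hb'⟩
      obtain ⟨c0, hec0, hec1⟩ := hmatch
      apply IPAux.construct Pp Pm M0 M1 (fun b => D0.A b)
        (fun b => D1.A (if b then !c0 else c0)) D0.x D1.x h0 h1 hprim
      · exact D0.hne
      · exact fun b u hu v => D0.cl_R hu v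
      · exact fun b v hv v' => D1.cl_R hv v'
      · exact fun b u _ => D0.root_R u
      · exact fun b v _ => D1.root_R v
      · exact fun v _ => D0.hcover v
      · intro v _
        rcases D1.hcover v with h | h | h
        · exact Or.inl h
        · cases c0
          · exact Or.inr (Or.inl (by simpa using h))
          · exact Or.inr (Or.inr (by simpa using h))
        · cases c0
          · exact Or.inr (Or.inr (by simpa using h))
          · exact Or.inr (Or.inl (by simpa using h))
      · intro b
        cases b
        · simpa using hec0.1
        · simpa using hec1.1
      · intro b
        cases b
        · simpa using hec0.2
        · simpa using hec1.2
    · -- Case B : w0 root, w1 in a cluster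
      subst hw0x
      obtain ⟨c0, hw1c⟩ : ∃ c, w1 ∈ D1.A c := by
        rcases hw1c with h | h
        exacts [⟨false, h⟩, ⟨true, h⟩]
      apply IPAux.construct Pp Pm M0 M1 (fun b => D0.A b)
        (fun _ => D1.A c0) D0.x w1 h0 h1 hprim
      · exact D0.hne
      · exact fun b u hu v => D0.cl_R hu v
      · exact fun b v hv v' => D1.cl_R hv v'
      · exact fun b u _ => D0.root_R u
      · exact fun b v hv => D1.cl_R' hw1c hv
      · exact fun v _ => D0.hcover v
      · intro v hv
        exact Or.inr (Or.inl ((D1.cl_R hw1c v).mp hv))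
      · intro b u hu
        obtain ⟨v, hv, hpr⟩ := IPAux.forth1 H (D0.root_R u)
        exact ⟨v, (D1.cl_R hw1c v).mp hv, hpr⟩
      · intro b v hv
        obtain ⟨a, ha⟩ := D0.hne b
        obtain ⟨u, hu, hpr⟩ := IPAux.back2 H (D0.root_R a)
          (fun v' hv' => D1.cl_R' ((D1.cl_R hw1c v').mp hv') hv)
        exact ⟨u, (D0.cl_R ha u).mp hu, hpr⟩
  · obtain ⟨b0, hw0b⟩ : ∃ b, w0 ∈ D0.A b := by
      rcases hw0b with h | h
      exacts [⟨false, h⟩, ⟨true, h⟩]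
    rcases hcov1 with hw1x | hw1c
    · -- Case C : w0 in a cluster, w1 root
      subst hw1x
      apply IPAux.construct Pp Pm M0 M1 (fun _ => D0.A b0)
        (fun b => D1.A b) w0 D1.x h0 h1 hprim
      · exact fun _ => D0.hne b0
      · exact fun b u hu v => D0.cl_R hu v
      · exact fun b v hv v' => D1.cl_R hv v'
      · exact fun b u hu => D0.cl_R' hw0b hu
      · exact fun b v _ => D1.root_R v
      · intro v hv
        exact Or.inr (Or.inl ((D0.cl_R hw0b v).mp hv))
      · exact fun v _ => D1.hcover v
      · intro b u hu
        obtain ⟨a, ha⟩ := D1.hne b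
        obtain ⟨v, hv, hpr⟩ := IPAux.forth2 H
          (fun y hy => D0.cl_R' ((D0.cl_R hw0b y).mp hy) hu) a (D1.root_R a)
        exact ⟨v, (D1.cl_R ha v).mp hv, hpr⟩
      · intro b v hv
        obtain ⟨u, hu, hpr⟩ := IPAux.back1 H (D1.root_R v)
        exact ⟨u, (D0.cl_R hw0b u).mp hu, hpr⟩
    · -- Case A : both in clusters
      obtain ⟨c0, hw1c⟩ : ∃ c, w1 ∈ D1.A c := by
        rcases hw1c with h | h
        exacts [⟨false, h⟩, ⟨true, h⟩]
      apply IPAux.construct Pp Pm M0 M1 (fun _ => D0.A b0)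
        (fun _ => D1.A c0) w0 w1 h0 h1 hprim
      · exact fun _ => D0.hne b0
      · exact fun b u hu v => D0.cl_R hu v
      · exact fun b v hv v' => D1.cl_R hv v'
      · exact fun b u hu => D0.cl_R' hw0b hu
      · exact fun b v hv => D1.cl_R' hw1c hv
      · intro v hv
        exact Or.inr (Or.inl ((D0.cl_R hw0b v).mp hv))
      · intro v hv
        exact Or.inr (Or.inl ((D1.cl_R hw1c v).mp hv))
      · intro b u hu
        obtain ⟨v, hv, hpr⟩ := IPAux.forth1 H (D0.cl_R' hw0b hu)
        exact ⟨v, (D1.cl_R hw1c v).mp hv, hpr⟩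
      · intro b v hv
        obtain ⟨u, hu, hpr⟩ := IPAux.back1 H (D1.cl_R' hw1c hv)
        exact ⟨u, (D0.cl_R hw0b u).mp hu, hpr⟩
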